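/- arXiv:1311.0451 — 2 statements merged into one kernel-verified Lean document; each statement's English description precedes it below -/
import Mathlib

section
/- Let (X,f) be a weakly mixing dynamical system with the shadowing property. Then (X,f) has the specification property: for every ε>0 there exists M>0 such that for every k ≥ 2, points x_1,…,x_k ∈ X, and integers 0 ≤ a_1 ≤ b_1 < a_2 ≤ b_2 < … < a_k ≤ b_k with a_i − b_{i−1} ≥ M for i = 2,…,k, there exists z ∈ X with d(f^j(z), f^j(x_i)) < ε for all a_i ≤ j ≤ b_i and 1 ≤ i ≤ k. -/
open Set Function

variable {X : Type*}

/-- A `δ`-pseudo-orbit of `f`. -/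
def IsPseudoOrbit [MetricSpace X] (f : X → X) (δ : ℝ) (x : ℕ → X) : Prop :=
  ∀ n : ℕ, dist (f (x n)) (x (n + 1)) < δ

/-- `z` ε-traces the sequence `x`. -/
def Traces [MetricSpace X] (f : X → X) (ε : ℝ) (z : X) (x : ℕ → X) : Prop :=
  ∀ n : ℕ, dist (f^[n] z) (x n) < ε

/-- The shadowing property. -/
def HasShadowing [MetricSpace X] (f : X → X) : Prop :=
  ∀ ε > (0 : ℝ), ∃ δ > (0 : ℝ), ∀ x : ℕ → X, IsPseudoOrbit f δ x → ∃ z : X, Traces f ε z x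

/-- The shadowing property of the restriction of `f` to an invariant set `S`. -/
def HasShadowingOn [MetricSpace X] (f : X → X) (S : Set X) : Prop :=
  ∀ ε > (0 : ℝ), ∃ δ > (0 : ℝ), ∀ x : ℕ → X, (∀ n, x n ∈ S) → IsPseudoOrbit f δ x →
    ∃ z ∈ S, Traces f ε z x

/-- Non-wandering point. -/
def NonWanderingPt [TopologicalSpace X] (f : X → X) (x : X) : Prop :=
  ∀ U ∈ nhds x, ∃ k : ℕ, 1 ≤ k ∧ ∃ y ∈ U, f^[k] y ∈ U

/-- The (forward) orbit of a point. -/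
def orbitSet (f : X → X) (x : X) : Set X := Set.range fun n : ℕ => f^[n] x

/-- Recurrent point. -/
def RecurrentPt [TopologicalSpace X] (f : X → X) (x : X) : Prop :=
  ∀ U ∈ nhds x, ∃ k : ℕ, 1 ≤ k ∧ f^[k] x ∈ U

/-- Minimal point: every point of the orbit closure has `x` in its own orbit closure,
i.e. the orbit closure of `x` is a minimal set. -/
def MinimalPt [TopologicalSpace X] (f : X → X) (x : X) : Prop :=
  ∀ y ∈ closure (orbitSet f x), x ∈ closure (orbitSet f y)

/-- Regularly recurrent point. -/
def RegRecPt [TopologicalSpace X] (f : X → X) (x : X) : Prop :=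
  ∀ U ∈ nhds x, ∃ k : ℕ, 1 ≤ k ∧ ∀ n : ℕ, f^[k * n] x ∈ U

/-- Equicontinuity of the family of iterates of `f`. -/
def EquicontinuousMap [MetricSpace X] (f : X → X) : Prop :=
  ∀ ε > (0 : ℝ), ∃ δ > (0 : ℝ), ∀ x y : X, dist x y < δ →
    ∀ n : ℕ, dist (f^[n] x) (f^[n] y) < ε

/-- `u` is a sensitive point of the subsystem on `S`. -/
def SensitivePtOn [MetricSpace X] (f : X → X) (S : Set X) (u : X) : Prop :=
  ∃ δ > (0 : ℝ), ∀ U ∈ nhds u, ∃ n : ℕ, ∃ a ∈ U ∩ S, ∃ b ∈ U ∩ S,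
    dist (f^[n] a) (f^[n] b) > δ

/-- `u` is a sensitive point of `(X,f)`. -/
def SensitivePt [MetricSpace X] (f : X → X) (u : X) : Prop :=
  ∃ δ > (0 : ℝ), ∀ U ∈ nhds u, ∃ n : ℕ, ∃ a ∈ U, ∃ b ∈ U,
    dist (f^[n] a) (f^[n] b) > δ

/-- Topological transitivity. -/
def TopTransitive {Y : Type*} [TopologicalSpace Y] (g : Y → Y) : Prop :=
  ∀ U V : Set Y, IsOpen U → U.Nonempty → IsOpen V → V.Nonempty →
    ∃ n : ℕ, 1 ≤ n ∧ (g^[n] '' U ∩ V).Nonempty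

/-- Weak mixing: the product system is transitive. -/
def WeaklyMixing [TopologicalSpace X] (f : X → X) : Prop :=
  TopTransitive (fun p : X × X => (f p.1, f p.2))

/-- Strong mixing. -/
def StronglyMixing {Y : Type*} [TopologicalSpace Y] (g : Y → Y) : Prop :=
  ∀ U V : Set Y, IsOpen U → U.Nonempty → IsOpen V → V.Nonempty →
    ∃ N : ℕ, ∀ n ≥ N, (g^[n] '' U ∩ V).Nonempty

/-- The shift map on the full shift over `d` symbols. -/
def shiftMap (d : ℕ) : (ℕ → Fin d) → (ℕ → Fin d) := fun x n => x (n + 1)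

/-- `π` is a factor map from the subsystem `(Y, f^[m])` onto the full shift on `d` symbols. -/
def FactorOntoShift [TopologicalSpace X] (f : X → X) (m : ℕ) (Y : Set X) (d : ℕ)
    (π : X → (ℕ → Fin d)) : Prop :=
  ContinuousOn π Y ∧ π '' Y = Set.univ ∧ ∀ y ∈ Y, π (f^[m] y) = shiftMap d (π y)


/-- An `ε`-chain of length `n` from `x` to `y`. -/
def Chain [MetricSpace X] (f : X → X) (ε : ℝ) (x y : X) (n : ℕ) : Prop :=
  ∃ c : ℕ → X, c 0 = x ∧ c n = y ∧ ∀ i < n, dist (f (c i)) (c (i + 1)) < ε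

lemma chain_trans [MetricSpace X] {f : X → X} {ε : ℝ} {x y z : X} {n m : ℕ}
    (h1 : Chain f ε x y n) (h2 : Chain f ε y z m) : Chain f ε x z (n + m) := by
  obtain ⟨c1, hc10, hc1n, hc1⟩ := h1
  obtain ⟨c2, hc20, hc2m, hc2⟩ := h2
  refine ⟨fun i => if i ≤ n then c1 i else c2 (i - n), by simp [hc10], ?_, ?_⟩
  · by_cases hm : m = 0
    · subst hm
      show (if n + 0 ≤ n then c1 (n + 0) else c2 (n + 0 - n)) = z
      rw [if_pos (by omega : n + 0 ≤ n), show n + 0 = n from rfl, hc1n, ← hc20, hc2m]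
    · show (if n + m ≤ n then c1 (n + m) else c2 (n + m - n)) = z
      rw [if_neg (by omega : ¬ n + m ≤ n), show n + m - n = m from by omega, hc2m]
  · intro i hi
    rcases lt_trichotomy i n with h | h | h
    · have h1' : i ≤ n := le_of_lt h
      have h2' : i + 1 ≤ n := h
      simp only [h1', h2', if_true]
      exact hc1 i h
    · subst h
      have hm : 0 < m := by omega
      have : ¬ (i + 1 ≤ i) := by omega
      simp only [le_refl, if_true, this, if_false, hc1n]
      rw [show i + 1 - i = 1 from by omega, ← hc20]
      exact hc2 0 hm
    · have h1' : ¬ (i ≤ n) := by omega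
      have h2' : ¬ (i + 1 ≤ n) := by omega
      simp only [h1', h2', if_false]
      rw [show i + 1 - n = (i - n) + 1 from by omega]
      exact hc2 (i - n) (by omega)

lemma chain_orbit [MetricSpace X] {f : X → X} {ε : ℝ} (hε : 0 < ε) (x : X) (n : ℕ) :
    Chain f ε x (f^[n] x) n :=
  ⟨fun i => f^[i] x, by simp, rfl, fun i _ => by
    rw [← Function.iterate_succ_apply' f i x]; simpa using hε⟩

lemma chain_loop_mul [MetricSpace X] {f : X → X} {ε : ℝ} {y : X} {n : ℕ}
    (h : Chain f ε y y n) : ∀ a : ℕ, Chain f ε y y (a * n) := by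
  intro a
  induction a with
  | zero => exact ⟨fun _ => y, rfl, rfl, fun i hi => absurd hi (by omega)⟩
  | succ a ih =>
      have := chain_trans ih h
      rwa [show a * n + n = (a + 1) * n from by ring] at this

lemma chain_loop_large [MetricSpace X] {f : X → X} {ε : ℝ} {y : X} {m : ℕ} (hm : 1 ≤ m)
    (h1 : Chain f ε y y m) (h2 : Chain f ε y y (m + 1)) :
    ∀ ℓ : ℕ, m * m ≤ ℓ → Chain f ε y y ℓ := by
  intro ℓ hℓ
  set q := ℓ / m with hq
  set r := ℓ % m with hr
  have hmod : m * q + r = ℓ := Nat.div_add_mod ℓ m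
  have hrm : r < m := Nat.mod_lt _ hm
  have hqm : m ≤ q := (Nat.le_div_iff_mul_le hm).mpr (by nlinarith)
  obtain ⟨s, hs⟩ : ∃ s, q = s + r := ⟨q - r, by omega⟩
  have := chain_trans (chain_loop_mul h1 s) (chain_loop_mul h2 r)
  rwa [show s * m + r * (m + 1) = ℓ from by rw [← hmod, hs]; ring] at this

lemma chain_left [MetricSpace X] {f : X → X} {ε : ℝ} {x x' y : X} {n : ℕ} (hn : 1 ≤ n)
    (hC : Chain f (ε / 2) x' y n) (hd : dist (f x) (f x') < ε / 2) : Chain f ε x y n := by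
  obtain ⟨c, hc0, hcn, hc⟩ := hC
  refine ⟨Function.update c 0 x, by simp, ?_, ?_⟩
  · rw [Function.update_of_ne (by omega), hcn]
  · intro i hi
    have hε : (0 : ℝ) < ε := by
      have := (dist_nonneg).trans_lt (hc 0 hn); linarith
    rcases Nat.eq_zero_or_pos i with h0 | h0
    · subst h0
      rw [Function.update_self, Function.update_of_ne (by omega)]
      calc dist (f x) (c 1) ≤ dist (f x) (f x') + dist (f x') (c 1) := dist_triangle _ _ _
        _ < ε / 2 + ε / 2 := by
            have := hc 0 hn; rw [hc0] at this; exact add_lt_add hd this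
        _ = ε := by ring
    · rw [Function.update_of_ne (by omega), Function.update_of_ne (by omega)]
      exact (hc i hi).trans_le (by linarith)

lemma chain_right [MetricSpace X] {f : X → X} {ε : ℝ} {x y y' : X} {n : ℕ} (hn : 1 ≤ n)
    (hC : Chain f (ε / 2) x y' n) (hd : dist y' y < ε / 2) : Chain f ε x y n := by
  obtain ⟨c, hc0, hcn, hc⟩ := hC
  refine ⟨Function.update c n y, ?_, by simp, ?_⟩
  · rw [Function.update_of_ne (by omega), hc0]
  · intro i hi
    have hε : (0 : ℝ) < ε := by
      have := (dist_nonneg).trans_lt (hc 0 hn); linarith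
    rw [Function.update_of_ne (by omega : i ≠ n)]
    rcases Nat.lt_or_ge (i + 1) n with h | h
    · rw [Function.update_of_ne (by omega)]
      exact (hc i hi).trans_le (by linarith)
    · have hin : i + 1 = n := by omega
      rw [hin, Function.update_self]
      calc dist (f (c i)) y ≤ dist (f (c i)) (c (i + 1)) + dist (c (i + 1)) y :=
            dist_triangle _ _ _
        _ < ε / 2 + ε / 2 := by
            refine add_lt_add (hc i hi) ?_
            rw [hin, hcn]; exact hd
        _ = ε := by ring

lemma prod_iterate {f : X → X} (n : ℕ) (p : X × X) :
    (fun p : X × X => (f p.1, f p.2))^[n] p = (f^[n] p.1, f^[n] p.2) := by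
  induction n generalizing p with
  | zero => rfl
  | succ n ih => rw [Function.iterate_succ_apply, ih]; simp

lemma chain_weaken [MetricSpace X] {f : X → X} {ε ε' : ℝ} (h : ε' ≤ ε) {x y : X} {n : ℕ}
    (hC : Chain f ε' x y n) : Chain f ε x y n := by
  obtain ⟨c, hc0, hcn, hc⟩ := hC
  exact ⟨c, hc0, hcn, fun i hi => (hc i hi).trans_le h⟩

lemma wm_chain [MetricSpace X] [CompactSpace X] {f : X → X} (hf : Continuous f)
    (hwm : WeaklyMixing f) {ε : ℝ} (hε : 0 < ε) (p q : X) :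
    ∃ n : ℕ, 1 ≤ n ∧ Chain f ε p q n ∧ Chain f ε p q (n + 1) := by
  have huc := Metric.uniformContinuous_iff.mp (CompactSpace.uniformContinuous_of_continuous hf)
  obtain ⟨δ, hδ0, hδ⟩ := huc (ε / 2 / 2) (by linarith)
  obtain ⟨n, hn1, pt, hptV, hpt⟩ := hwm (Metric.ball p δ ×ˢ Metric.ball (f p) δ)
    (Metric.ball q (ε / 2 / 2) ×ˢ Metric.ball q (ε / 2 / 2))
    (Metric.isOpen_ball.prod Metric.isOpen_ball)
    ⟨(p, f p), Set.mem_prod.mpr ⟨Metric.mem_ball_self hδ0, Metric.mem_ball_self hδ0⟩⟩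
    (Metric.isOpen_ball.prod Metric.isOpen_ball)
    ⟨(q, q), Set.mem_prod.mpr ⟨Metric.mem_ball_self (by linarith),
      Metric.mem_ball_self (by linarith)⟩⟩
  obtain ⟨⟨u, v⟩, huv, hmap⟩ := hptV
  rw [prod_iterate] at hmap
  obtain ⟨hu, hv⟩ := Set.mem_prod.mp huv
  rw [← hmap] at hpt
  obtain ⟨hfu, hfv⟩ := Set.mem_prod.mp hpt
  simp only [Metric.mem_ball] at hu hv hfu hfv
  have hC1 : Chain f ε p q n := by
    have horb : Chain f (ε / 2 / 2) u (f^[n] u) n := chain_orbit (by linarith) u n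
    have h2 : Chain f (ε / 2) u q n := chain_right hn1 horb hfu
    exact chain_left hn1 h2 ((hδ (by rwa [dist_comm] at hu)).trans_le (by linarith))
  have hC2 : Chain f ε (f p) q n := by
    have horb : Chain f (ε / 2 / 2) v (f^[n] v) n := chain_orbit (by linarith) v n
    have h2 : Chain f (ε / 2) v q n := chain_right hn1 horb hfv
    exact chain_left hn1 h2 ((hδ (by rwa [dist_comm] at hv)).trans_le (by linarith))
  have hstep : Chain f ε p (f p) 1 := by
    simpa using chain_orbit (f := f) hε p 1
  refine ⟨n, hn1, hC1, ?_⟩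
  have := chain_trans hstep hC2
  rwa [show 1 + n = n + 1 from by omega] at this

lemma chain_mixing [MetricSpace X] [CompactSpace X] [Nonempty X] {f : X → X}
    (hf : Continuous f) (hwm : WeaklyMixing f) {β : ℝ} (hβ : 0 < β) :
    ∃ M : ℕ, 1 ≤ M ∧ ∀ x y : X, ∀ n : ℕ, M ≤ n → Chain f β x y n := by
  classical
  have huc := Metric.uniformContinuous_iff.mp (CompactSpace.uniformContinuous_of_continuous hf)
  obtain ⟨η, hη0, hη⟩ := huc (β / 2) (by linarith)
  set y₀ : X := Classical.arbitrary X with hy₀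
  obtain ⟨m, hm1, hcm, hcm1⟩ := wm_chain hf hwm hβ y₀ y₀
  have hloop := chain_loop_large hm1 hcm hcm1
  -- uniform chains into y₀
  have hto : ∃ N : ℕ, ∀ x : X, ∃ n : ℕ, 1 ≤ n ∧ n ≤ N ∧ Chain f β x y₀ n := by
    have hcover : (Set.univ : Set X) ⊆ ⋃ p : X, Metric.ball p η :=
      fun x _ => Set.mem_iUnion.mpr ⟨x, Metric.mem_ball_self hη0⟩
    obtain ⟨t, ht⟩ := isCompact_univ.elim_finite_subcover _
      (fun p : X => Metric.isOpen_ball) hcover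
    choose np hnp1 hnpC hnpC' using fun p : X => wm_chain hf hwm (by linarith : (0:ℝ) < β / 2) p y₀
    refine ⟨t.sup np, fun x => ?_⟩
    obtain ⟨p, hpt, hxp⟩ := Set.mem_iUnion₂.mp (ht (Set.mem_univ x))
    refine ⟨np p, hnp1 p, Finset.le_sup hpt, ?_⟩
    exact chain_left (hnp1 p) (hnpC p) (hη (Metric.mem_ball.mp hxp))
  -- uniform chains out of y₀
  have hfrom : ∃ N : ℕ, ∀ y : X, ∃ n : ℕ, 1 ≤ n ∧ n ≤ N ∧ Chain f β y₀ y n := by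
    have hcover : (Set.univ : Set X) ⊆ ⋃ q : X, Metric.ball q (β / 2) :=
      fun y _ => Set.mem_iUnion.mpr ⟨y, Metric.mem_ball_self (by linarith)⟩
    obtain ⟨t, ht⟩ := isCompact_univ.elim_finite_subcover _
      (fun q : X => Metric.isOpen_ball) hcover
    choose nq hnq1 hnqC hnqC' using fun q : X => wm_chain hf hwm (by linarith : (0:ℝ) < β / 2) y₀ q
    refine ⟨t.sup nq, fun y => ?_⟩
    obtain ⟨q, hqt, hyq⟩ := Set.mem_iUnion₂.mp (ht (Set.mem_univ y))
    refine ⟨nq q, hnq1 q, Finset.le_sup hqt, ?_⟩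
    exact chain_right (hnq1 q) (hnqC q) (by rw [dist_comm]; exact Metric.mem_ball.mp hyq)
  obtain ⟨N1, hN1⟩ := hto
  obtain ⟨N2, hN2⟩ := hfrom
  refine ⟨N1 + N2 + m * m + 1, by omega, fun x y n hn => ?_⟩
  obtain ⟨n1, hn11, hn1N, hC1⟩ := hN1 x
  obtain ⟨n2, hn21, hn2N, hC2⟩ := hN2 y
  have hℓ : m * m ≤ n - n1 - n2 := by omega
  have := chain_trans hC1 (chain_trans (hloop _ hℓ) hC2)
  rwa [show n1 + (n - n1 - n2 + n2) = n from by omega] at this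

lemma glue_pseudo_orbit [MetricSpace X] {f : X → X} {β : ℝ} (hβ : 0 < β) {M : ℕ}
    (hM1 : 1 ≤ M) (hM : ∀ x y : X, ∀ n : ℕ, M ≤ n → Chain f β x y n)
    (k : ℕ) (hk : 1 ≤ k) (x : ℕ → X) (a b : ℕ → ℕ)
    (hab : ∀ i < k, a i ≤ b i) (hgap : ∀ i, i + 1 < k → b i + M ≤ a (i + 1)) :
    ∃ w : ℕ → X, IsPseudoOrbit f β w ∧
      (∀ i < k, ∀ j : ℕ, a i ≤ j → j ≤ b i → w j = f^[j] (x i)) := by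
  have hbmono : ∀ i i' : ℕ, i ≤ i' → i' < k → b i ≤ b i' := by
    intro i i'
    induction i' with
    | zero => intro h _; rw [Nat.le_zero.mp h]
    | succ i' ih =>
        intro h hk2
        rcases Nat.eq_or_lt_of_le h with h' | h' 
        · rw [h']
        · have h1 := ih (by omega) (by omega)
          have h2 := hgap i' hk2
          have h3 := hab (i' + 1) hk2
          omega
  suffices H : ∀ k', 1 ≤ k' → k' ≤ k → ∃ w : ℕ → X, IsPseudoOrbit f β w ∧
      (∀ i < k', ∀ j : ℕ, a i ≤ j → j ≤ b i → w j = f^[j] (x i)) ∧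
      (∀ j : ℕ, b (k' - 1) ≤ j → w j = f^[j] (x (k' - 1))) by
    obtain ⟨w, hw1, hw2, _⟩ := H k hk le_rfl
    exact ⟨w, hw1, hw2⟩
  intro k' hk'
  induction k' with
  | zero => omega
  | succ k' ih =>
      rcases Nat.eq_zero_or_pos k' with h0 | h0
      · subst h0
        intro _
        refine ⟨fun j => f^[j] (x 0), fun n => ?_, ?_, ?_⟩
        · rw [← Function.iterate_succ_apply' f n (x 0)]; simpa using hβ
        · intro i hi j _ _
          have : i = 0 := by omega
          rw [this]
        · intro j _; rfl
      · intro hk'k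
        obtain ⟨w, hw1, hw2, hw3⟩ := ih h0 (by omega)
        set B := b (k' - 1) with hB
        set A := a k' with hA
        have hBA : B + M ≤ A := by
          have := hgap (k' - 1) (by omega)
          rw [show k' - 1 + 1 = k' from by omega] at this
          exact this
        obtain ⟨c, hc0, hcL, hc⟩ := hM (f^[B] (x (k' - 1))) (f^[A] (x k')) (A - B) (by omega)
        refine ⟨fun j => if j ≤ B then w j else if j ≤ A then c (j - B) else f^[j] (x k'),
          ?_, ?_, ?_⟩
        · intro n
          rcases Nat.lt_or_ge n B with h | h
          · simp only [if_pos (by omega : n ≤ B), if_pos (by omega : n + 1 ≤ B)]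
            exact hw1 n
          · rcases Nat.eq_or_lt_of_le h with h' | h'
            · -- n = B
              simp only [if_pos (by omega : n ≤ B), if_neg (by omega : ¬ n + 1 ≤ B),
                if_pos (by omega : n + 1 ≤ A)]
              rw [hw3 n (by omega), show n + 1 - B = 1 from by omega, ← h', ← hc0]
              exact hc 0 (by omega)
            · -- B < n
              simp only [if_neg (by omega : ¬ n ≤ B), if_neg (by omega : ¬ n + 1 ≤ B)]
              rcases Nat.lt_or_ge n A with h2 | h2
              · simp only [if_pos (by omega : n ≤ A)]
                rcases Nat.lt_or_ge (n + 1) (A + 1) with h3 | h3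
                · rw [if_pos (by omega : n + 1 ≤ A),
                    show n + 1 - B = (n - B) + 1 from by omega]
                  exact hc (n - B) (by omega)
                · omega
              · rcases Nat.eq_or_lt_of_le h2 with h2' | h2'
                · -- n = A
                  simp only [if_pos (by omega : n ≤ A), if_neg (by omega : ¬ n + 1 ≤ A)]
                  rw [show n - B = A - B from by omega, hcL, h2',
                    ← Function.iterate_succ_apply' f n (x k')]
                  simpa using hβ
                · simp only [if_neg (by omega : ¬ n ≤ A), if_neg (by omega : ¬ n + 1 ≤ A)]
                  rw [← Function.iterate_succ_apply' f n (x k')]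
                  simpa using hβ
        · intro i hi j hj1 hj2
          rcases Nat.lt_or_ge i k' with h | h
          · have hjB : j ≤ B := le_trans hj2 (hbmono i (k' - 1) (by omega) (by omega))
            simp only [if_pos hjB]
            exact hw2 i h j hj1 hj2
          · have hik : i = k' := by omega
            subst hik
            have hjA : A ≤ j := hj1
            have hjB : ¬ j ≤ B := by omega
            simp only [if_neg hjB]
            rcases Nat.eq_or_lt_of_le hjA with h' | h'
            · rw [if_pos (by omega : j ≤ A), show j - B = A - B from by omega, hcL, h']
            · rw [if_neg (by omega : ¬ j ≤ A)]
        · intro j hj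
          simp only [Nat.add_sub_cancel] at hj ⊢
          have hBk : b (k' - 1) ≤ b k' := hbmono (k' - 1) k' (by omega) (by omega)
          have hAb : A ≤ b k' := hab k' (by omega)
          have hjB : ¬ j ≤ B := by omega
          simp only [if_neg hjB]
          rcases Nat.lt_or_ge A j with h' | h'
          · rw [if_neg (by omega : ¬ j ≤ A)]
          · have hjA : j = A := by omega
            rw [if_pos (by omega : j ≤ A), show j - B = A - B from by omega, hcL, hjA]

theorem weak_mixing_shadowing_specification [MetricSpace X] [CompactSpace X]
    (f : X → X) (hf : Continuous f) (hwm : WeaklyMixing f) (hsh : HasShadowing f) :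
    ∀ ε > (0 : ℝ), ∃ M : ℕ, 0 < M ∧
      ∀ k : ℕ, 2 ≤ k → ∀ x : ℕ → X, ∀ a b : ℕ → ℕ,
        (∀ i < k, a i ≤ b i) →
        (∀ i, i + 1 < k → b i + M ≤ a (i + 1)) →
        ∃ z : X, ∀ i < k, ∀ j : ℕ, a i ≤ j → j ≤ b i →
          dist (f^[j] z) (f^[j] (x i)) < ε := by
  intro ε hε
  obtain ⟨δ, hδ0, hshad⟩ := hsh ε hε
  by_cases hX : Nonempty X
  · obtain ⟨M, hM1, hM⟩ := chain_mixing hf hwm hδ0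
    refine ⟨M, by omega, fun k hk x a b hab hgap => ?_⟩
    obtain ⟨w, hw1, hw2⟩ := glue_pseudo_orbit hδ0 hM1 hM k (by omega) x a b hab hgap
    obtain ⟨z, hz⟩ := hshad w hw1
    refine ⟨z, fun i hi j hj1 hj2 => ?_⟩
    have := hz j
    rwa [hw2 i hi j hj1 hj2] at this
  · exact ⟨1, by omega, fun k hk x a b hab hgap => (hX ⟨x 0⟩).elim⟩
end

section
/- If (X,f) is weakly mixing, positively expansive, and has the shadowing property, then it has the periodic specification property: for every ε>0 there exists M>0 such that for every k ≥ 2, points x_1,…,x_k, integers 0 ≤ a_1 ≤ b_1 < … < a_k ≤ b_k with a_i − b_{i−1} ≥ M, and every integer p ≥ M + b_k − a_1, there exists z ∈ X with f^p(z) = z and d(f^j(z), f^j(x_i)) < ε for all a_i ≤ j ≤ b_i, 1 ≤ i ≤ k. -/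
open Set Function

variable {X : Type*}

/-- Positively expansive with expansive constant β. -/
def PosExpansive [MetricSpace X] (f : X → X) (β : ℝ) : Prop :=
  0 < β ∧ ∀ x y : X, x ≠ y → ∃ n : ℕ, dist (f^[n] x) (f^[n] y) > β


section Aux

variable [MetricSpace X]

/-- A δ-chain from `u` to `v` of length `n`. -/
def ChainFrom (f : X → X) (δ : ℝ) (u v : X) (n : ℕ) : Prop :=
  ∃ c : ℕ → X, c 0 = u ∧ c n = v ∧ ∀ i < n, dist (f (c i)) (c (i + 1)) < δ

lemma chainFrom_refl (f : X → X) (δ : ℝ) (u : X) : ChainFrom f δ u u 0 :=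
  ⟨fun _ => u, rfl, rfl, fun i hi => absurd hi (Nat.not_lt_zero i)⟩

/-- Concatenation of two finite chains. -/
def chainConcat (n1 : ℕ) (c1 c2 : ℕ → X) : ℕ → X :=
  fun j => if j ≤ n1 then c1 j else c2 (j - n1)

lemma chainConcat_left {n1 : ℕ} (c1 c2 : ℕ → X) {j : ℕ} (h : j ≤ n1) :
    chainConcat n1 c1 c2 j = c1 j := if_pos h

lemma chainConcat_right {n1 : ℕ} {c1 c2 : ℕ → X} (h : c1 n1 = c2 0) (t : ℕ) :
    chainConcat n1 c1 c2 (n1 + t) = c2 t := by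
  rcases Nat.eq_zero_or_pos t with rfl | ht
  · simpa [chainConcat] using h
  · have h1 : ¬ (n1 + t ≤ n1) := by omega
    simp only [chainConcat, h1, if_false, Nat.add_sub_cancel_left]

lemma isChain_concat {f : X → X} {δ : ℝ} {c1 c2 : ℕ → X} {n1 n2 : ℕ}
    (h1 : ∀ i < n1, dist (f (c1 i)) (c1 (i + 1)) < δ)
    (h2 : ∀ i < n2, dist (f (c2 i)) (c2 (i + 1)) < δ)
    (hjoin : c1 n1 = c2 0) :
    ∀ i < n1 + n2, dist (f (chainConcat n1 c1 c2 i)) (chainConcat n1 c1 c2 (i + 1)) < δ := by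
  intro i hi
  by_cases h : i < n1
  · rw [chainConcat_left c1 c2 h.le, chainConcat_left c1 c2 h]
    exact h1 i h
  · obtain ⟨t, rfl⟩ : ∃ t, i = n1 + t := ⟨i - n1, by omega⟩
    rw [chainConcat_right hjoin t, show n1 + t + 1 = n1 + (t + 1) from rfl,
      chainConcat_right hjoin (t + 1)]
    exact h2 t (by omega)

lemma chainFrom_trans {f : X → X} {δ : ℝ} {u v w : X} {m n : ℕ}
    (h1 : ChainFrom f δ u v m) (h2 : ChainFrom f δ v w n) :
    ChainFrom f δ u w (m + n) := by
  obtain ⟨c1, hc10, hc1m, hc1⟩ := h1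
  obtain ⟨c2, hc20, hc2n, hc2⟩ := h2
  have key : c1 m = c2 0 := by rw [hc1m, hc20]
  refine ⟨chainConcat m c1 c2, ?_, ?_, isChain_concat hc1 hc2 key⟩
  · rw [chainConcat_left c1 c2 (Nat.zero_le m), hc10]
  · rw [chainConcat_right key n, hc2n]

lemma chainFrom_mul {f : X → X} {δ : ℝ} {v : X} {t : ℕ}
    (h : ChainFrom f δ v v t) : ∀ s : ℕ, ChainFrom f δ v v (s * t) := by
  intro s
  induction s with
  | zero => simpa using chainFrom_refl f δ v
  | succ s ih =>
    have := chainFrom_trans ih h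
    rwa [show s * t + t = (s + 1) * t by ring] at this

lemma chain_of_near {f : X → X} {δ δ' : ℝ}
    (hδ' : ∀ a b : X, dist a b < δ' → dist (f a) (f b) < δ / 2)
    {u v y : X} {n : ℕ} (hn : 1 ≤ n) (hy : dist y u < δ')
    (hfy : dist (f^[n] y) v < δ / 2) : ChainFrom f δ u v n := by
  have hfu : dist (f u) (f y) < δ / 2 := hδ' u y (by rwa [dist_comm])
  have hδpos : 0 < δ := by
    have h0 : (0:ℝ) ≤ dist (f u) (f y) := dist_nonneg
    linarith
  set c : ℕ → X := fun i => if i = 0 then u else if i = n then v else f^[i] y with hcdef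
  have hc0 : c 0 = u := by simp [hcdef]
  have hcn : c n = v := by
    have hn0 : ¬ n = 0 := by omega
    rw [hcdef]
    show (if n = 0 then u else if n = n then v else f^[n] y) = v
    rw [if_neg hn0, if_pos rfl]
  have hcm : ∀ i, i ≠ 0 → i ≠ n → c i = f^[i] y := by
    intro i h1 h2; simp [hcdef, h1, h2]
  refine ⟨c, hc0, hcn, ?_⟩
  intro i hi
  rcases Nat.eq_zero_or_pos i with rfl | hipos
  · rw [hc0]
    rcases eq_or_lt_of_le hn with h1 | h1
    · rw [show (0:ℕ) + 1 = n from h1, hcn]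
      have h2 : f y = f^[n] y := by rw [← h1]; simp
      calc dist (f u) v ≤ dist (f u) (f y) + dist (f y) v := dist_triangle _ _ _
        _ < δ / 2 + δ / 2 := add_lt_add hfu (by rw [h2]; exact hfy)
        _ = δ := by ring
    · rw [hcm 1 (by omega) (by omega)]
      calc dist (f u) (f^[1] y) = dist (f u) (f y) := by simp
        _ < δ / 2 := hfu
        _ < δ := by linarith
  · rw [hcm i (by omega) (by omega)]
    by_cases h1 : i + 1 = n
    · rw [h1, hcn]
      have h2 : f (f^[i] y) = f^[n] y := by rw [← h1, Function.iterate_succ_apply']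
      rw [h2]; linarith
    · rw [hcm (i + 1) (by omega) h1, ← Function.iterate_succ_apply' f i y, dist_self]
      exact hδpos

lemma chain_adjust {f : X → X} {δ δ' : ℝ} (hδ : 0 < δ) (hδ'' : δ' ≤ δ / 4)
    (hδ' : ∀ a b : X, dist a b < δ' → dist (f a) (f b) < δ / 4)
    {u v p q : X} {m : ℕ} (hm : 1 ≤ m) (hup : dist u p < δ') (hqv : dist q v < δ')
    (hch : ChainFrom f (δ / 4) p q m) : ChainFrom f δ u v m := by
  obtain ⟨c, hc0, hcm, hc⟩ := hch
  have hfup : dist (f u) (f p) < δ / 4 := hδ' u p hup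
  set c' : ℕ → X := fun i => if i = 0 then u else if i = m then v else c i with hcdef
  have hc'0 : c' 0 = u := by simp [hcdef]
  have hc'm : c' m = v := by
    have hm0 : ¬ m = 0 := by omega
    rw [hcdef]
    show (if m = 0 then u else if m = m then v else c m) = v
    rw [if_neg hm0, if_pos rfl]
  have hc'mid : ∀ i, i ≠ 0 → i ≠ m → c' i = c i := by
    intro i h1 h2; simp [hcdef, h1, h2]
  refine ⟨c', hc'0, hc'm, ?_⟩
  intro i hi
  rcases Nat.eq_zero_or_pos i with rfl | hipos
  · rw [hc'0]
    have h2 : dist (f p) (c 1) < δ / 4 := by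
      have := hc 0 (by omega); rwa [hc0] at this
    rcases eq_or_lt_of_le hm with h1 | h1
    · rw [show (0:ℕ) + 1 = m from h1, hc'm]
      have h3 : c 1 = q := by rw [h1]; exact hcm
      calc dist (f u) v ≤ dist (f u) (f p) + dist (f p) (c 1) + dist (c 1) v :=
            dist_triangle4 _ _ _ _
        _ < δ / 4 + δ / 4 + δ' := add_lt_add (add_lt_add hfup h2) (by rw [h3]; exact hqv)
        _ ≤ δ := by linarith
    · rw [hc'mid 1 (by omega) (by omega)]
      calc dist (f u) (c 1) ≤ dist (f u) (f p) + dist (f p) (c 1) := dist_triangle _ _ _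
        _ < δ / 4 + δ / 4 := add_lt_add hfup h2
        _ ≤ δ := by linarith
  · rw [hc'mid i (by omega) (by omega)]
    by_cases h1 : i + 1 = m
    · rw [h1, hc'm]
      have h2 : dist (f (c i)) q < δ / 4 := by
        have := hc i (by omega); rwa [h1, hcm] at this
      calc dist (f (c i)) v ≤ dist (f (c i)) q + dist q v := dist_triangle _ _ _
        _ < δ / 4 + δ' := add_lt_add h2 hqv
        _ ≤ δ := by linarith
    · rw [hc'mid (i + 1) (by omega) h1]
      have := hc i hi
      linarith

lemma prod_iterate_s16 (f : X → X) (n : ℕ) (q : X × X) :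
    (fun r : X × X => (f r.1, f r.2))^[n] q = (f^[n] q.1, f^[n] q.2) := by
  induction n generalizing q with
  | zero => simp
  | succ n ih =>
    rw [Function.iterate_succ_apply, ih]
    simp [Function.iterate_succ_apply]

lemma wm_pair {f : X → X} (hwm : WeaklyMixing f)
    {U1 V1 U2 V2 : Set X} (hU1 : IsOpen U1) (hU1n : U1.Nonempty)
    (hV1 : IsOpen V1) (hV1n : V1.Nonempty) (hU2 : IsOpen U2) (hU2n : U2.Nonempty)
    (hV2 : IsOpen V2) (hV2n : V2.Nonempty) :
    ∃ n : ℕ, 1 ≤ n ∧ (∃ y ∈ U1, f^[n] y ∈ V1) ∧ ∃ y ∈ U2, f^[n] y ∈ V2 := by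
  obtain ⟨n, hn1, w, hw⟩ := hwm (U1 ×ˢ U2) (V1 ×ˢ V2) (hU1.prod hU2) (hU1n.prod hU2n)
    (hV1.prod hV2) (hV1n.prod hV2n)
  obtain ⟨⟨y, hy, hyw⟩, hwV⟩ := hw
  rw [prod_iterate_s16] at hyw
  subst hyw
  exact ⟨n, hn1, ⟨y.1, hy.1, hwV.1⟩, ⟨y.2, hy.2, hwV.2⟩⟩

lemma surj_of_wm [CompactSpace X] [Nonempty X] {f : X → X} (hf : Continuous f)
    (hwm : WeaklyMixing f) : Function.Surjective f := by
  intro z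
  by_contra h
  push_neg at h
  have hz : z ∈ (Set.range f)ᶜ := by
    intro hz
    obtain ⟨w, hw⟩ := hz
    exact h w hw
  have hcl : IsClosed (Set.range f) := (isCompact_range hf).isClosed
  obtain ⟨n, hn1, ⟨y, -, hy⟩, -⟩ := wm_pair hwm isOpen_univ Set.univ_nonempty
    hcl.isOpen_compl ⟨z, hz⟩ isOpen_univ Set.univ_nonempty hcl.isOpen_compl ⟨z, hz⟩
  apply hy
  obtain ⟨n, rfl⟩ : ∃ m, m + 1 = n := ⟨n - 1, by omega⟩
  rw [Function.iterate_succ_apply']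
  exact ⟨f^[n] y, rfl⟩

lemma chain_mixing_pt [CompactSpace X] {f : X → X} (hf : Continuous f)
    (hwm : WeaklyMixing f) {δ : ℝ} (hδ : 0 < δ) (u v : X) :
    ∃ N : ℕ, ∀ m, N ≤ m → ChainFrom f δ u v m := by
  have : Nonempty X := ⟨u⟩
  have hsurj := surj_of_wm hf hwm
  obtain ⟨δ', hδ'pos, hδ'⟩ := Metric.uniformContinuous_iff.mp
    (CompactSpace.uniformContinuous_of_continuous hf) (δ / 2) (by linarith)
  have hδ'' : ∀ a b : X, dist a b < δ' → dist (f a) (f b) < δ / 2 := fun a b h => hδ' h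
  have hV2n : (f ⁻¹' Metric.ball v (δ / 2)).Nonempty := by
    obtain ⟨w, hw⟩ := hsurj v
    refine ⟨w, ?_⟩
    simp only [Set.mem_preimage, Metric.mem_ball, hw, dist_self]
    linarith
  -- chains v → v of lengths a and a+1
  obtain ⟨a, ha1, ⟨y1, hy1, hfy1⟩, ⟨y2, hy2, hfy2⟩⟩ := wm_pair hwm
    (Metric.isOpen_ball (x := v) (ε := δ')) ⟨v, Metric.mem_ball_self hδ'pos⟩
    (Metric.isOpen_ball (x := v) (ε := δ / 2)) ⟨v, Metric.mem_ball_self (by linarith)⟩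
    (Metric.isOpen_ball (x := v) (ε := δ')) ⟨v, Metric.mem_ball_self hδ'pos⟩
    (Metric.isOpen_ball.preimage hf) hV2n
  have hca : ChainFrom f δ v v a :=
    chain_of_near hδ'' ha1 (Metric.mem_ball.mp hy1) (Metric.mem_ball.mp hfy1)
  have hca1 : ChainFrom f δ v v (a + 1) := by
    refine chain_of_near hδ'' (by omega) (Metric.mem_ball.mp hy2) ?_
    rw [Function.iterate_succ_apply']
    exact Metric.mem_ball.mp (Set.mem_preimage.mp hfy2)
  -- a chain u → v of length n
  obtain ⟨n, hn1, ⟨y3, hy3, hfy3⟩, -⟩ := wm_pair hwm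
    (Metric.isOpen_ball (x := u) (ε := δ')) ⟨u, Metric.mem_ball_self hδ'pos⟩
    (Metric.isOpen_ball (x := v) (ε := δ / 2)) ⟨v, Metric.mem_ball_self (by linarith)⟩
    (Metric.isOpen_ball (x := u) (ε := δ')) ⟨u, Metric.mem_ball_self hδ'pos⟩
    (Metric.isOpen_ball (x := v) (ε := δ / 2)) ⟨v, Metric.mem_ball_self (by linarith)⟩
  have hcn : ChainFrom f δ u v n :=
    chain_of_near hδ'' hn1 (Metric.mem_ball.mp hy3) (Metric.mem_ball.mp hfy3)
  -- all lengths ≥ a * a from v to v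
  have key : ∀ s : ℕ, a * a ≤ s → ChainFrom f δ v v s := by
    intro s hs
    have ha0 : 0 < a := ha1
    have hmod : a * (s / a) + s % a = s := Nat.div_add_mod s a
    have hra : s % a < a := Nat.mod_lt _ ha0
    have hqa : a ≤ s / a := (Nat.le_div_iff_mul_le ha0).mpr hs
    have hrq : s % a ≤ s / a := le_trans hra.le hqa
    have hrep : s = (s / a - s % a) * a + s % a * (a + 1) := by
      have hmod' : (a : ℤ) * ((s : ℕ) / a) + ((s : ℕ) % a) = s := by exact_mod_cast hmod
      zify [hrq]
      linear_combination -hmod'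
    rw [hrep]
    exact chainFrom_trans (chainFrom_mul hca _) (chainFrom_mul hca1 _)
  refine ⟨n + a * a, fun m hm => ?_⟩
  have h1 : m = n + (m - n) := by omega
  rw [h1]
  exact chainFrom_trans hcn (key _ (by omega))

lemma chain_mixing_unif [CompactSpace X] {f : X → X} (hf : Continuous f)
    (hwm : WeaklyMixing f) {δ : ℝ} (hδ : 0 < δ) :
    ∃ M : ℕ, 1 ≤ M ∧ ∀ u v : X, ∀ m, M ≤ m → ChainFrom f δ u v m := by
  obtain ⟨δ'', hδ''pos, hδ''⟩ := Metric.uniformContinuous_iff.mp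
    (CompactSpace.uniformContinuous_of_continuous hf) (δ / 4) (by linarith)
  set δ' := min δ'' (δ / 4) with hδ'def
  have hδ'pos : 0 < δ' := lt_min hδ''pos (by linarith)
  have hδ'le : δ' ≤ δ / 4 := min_le_right _ _
  have hδ'cont : ∀ a b : X, dist a b < δ' → dist (f a) (f b) < δ / 4 :=
    fun a b h => hδ'' (lt_of_lt_of_le h (min_le_left _ _))
  obtain ⟨t, ht⟩ := IsCompact.elim_finite_subcover isCompact_univ
    (fun x : X => Metric.ball x δ') (fun x => Metric.isOpen_ball)
    (fun x _ => Set.mem_iUnion.mpr ⟨x, Metric.mem_ball_self hδ'pos⟩)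
  choose N hN using fun p q : X => chain_mixing_pt hf hwm (by linarith : (0:ℝ) < δ / 4) p q
  refine ⟨(t.sup fun p => t.sup fun q => N p q) + 1, by omega, fun u v m hm => ?_⟩
  obtain ⟨p, hp, hup⟩ : ∃ p ∈ t, u ∈ Metric.ball p δ' := by
    have := ht (Set.mem_univ u)
    simpa using this
  obtain ⟨q, hq, hvq⟩ : ∃ q ∈ t, v ∈ Metric.ball q δ' := by
    have := ht (Set.mem_univ v)
    simpa using this
  have hNm : N p q ≤ m := by
    have h1 : N p q ≤ t.sup fun q => N p q := Finset.le_sup (f := fun q => N p q) hq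
    have h2 : (t.sup fun q => N p q) ≤ t.sup fun p => t.sup fun q => N p q :=
      Finset.le_sup (f := fun p => t.sup fun q => N p q) hp
    omega
  exact chain_adjust hδ hδ'le hδ'cont (by omega) (Metric.mem_ball.mp hup)
    (by rw [dist_comm]; exact Metric.mem_ball.mp hvq) (hN p q m hNm)

lemma periodic_pseudo {f : X → X} {δ : ℝ} {w : X} {p : ℕ} (hp : 1 ≤ p)
    {c : ℕ → X} (hc0 : c 0 = w) (hcp : c p = w)
    (hch : ∀ i < p, dist (f (c i)) (c (i + 1)) < δ) :
    IsPseudoOrbit f δ (fun n => c (n % p)) := by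
  intro n
  show dist (f (c (n % p))) (c ((n + 1) % p)) < δ
  have h1 : n % p < p := Nat.mod_lt _ hp
  have hd := Nat.div_add_mod n p
  set T := p * (n / p) with hT
  by_cases h : n % p + 1 = p
  · have h2 : (n + 1) % p = 0 := by
      have h3 : n + 1 = T + p := by omega
      rw [h3, Nat.add_mod_right, hT, Nat.mul_mod_right]
    rw [h2]
    have h3 := hch (n % p) h1
    rwa [h, hcp, ← hc0] at h3
  · have h2 : (n + 1) % p = n % p + 1 := by
      have h3 : n + 1 = (n % p + 1) + T := by omega
      rw [h3, hT, Nat.add_mul_mod_self_left, Nat.mod_eq_of_lt (by omega)]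
    rw [h2]
    exact hch _ h1

lemma iterate_periodic {f : X → X} {z : X} {p : ℕ} (h : f^[p] z = z) :
    ∀ s : ℕ, f^[p * s] z = z := by
  intro s
  induction s with
  | zero => simp
  | succ s ih => rw [Nat.mul_succ, Function.iterate_add_apply, h, ih]

lemma eq_of_close {f : X → X} {β : ℝ} (hexp : PosExpansive f β) {z1 z2 : X}
    (h : ∀ n, dist (f^[n] z1) (f^[n] z2) ≤ β) : z1 = z2 := by
  by_contra hne
  obtain ⟨n, hn⟩ := hexp.2 z1 z2 hne
  exact absurd (h n) (by linarith)

lemma a_mono {k M : ℕ} (hM1 : 1 ≤ M) {a b : ℕ → ℕ} (hab : ∀ i < k, a i ≤ b i)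
    (hgap : ∀ i, i + 1 < k → b i + M ≤ a (i + 1)) : ∀ i < k, a 0 ≤ a i := by
  intro i
  induction i with
  | zero => intro _; exact le_refl _
  | succ i ih =>
    intro hik
    have h1 := ih (by omega)
    have h2 := hab i (by omega)
    have h3 := hgap i hik
    omega

lemma b_mono {k M : ℕ} {a b : ℕ → ℕ} (hab : ∀ i < k, a i ≤ b i)
    (hgap : ∀ i, i + 1 < k → b i + M ≤ a (i + 1)) :
    ∀ i' i'', i' ≤ i'' → i'' < k → b i' ≤ b i'' := by
  intro i' i'' h hik
  induction i'' with
  | zero =>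
    have h0 : i' = 0 := by omega
    rw [h0]
  | succ n ih =>
    rcases Nat.lt_or_ge i' (n + 1) with h1 | h1
    · have h2 : b i' ≤ b n := ih (by omega) (by omega)
      have h3 := hgap n hik
      have h4 := hab (n + 1) hik
      omega
    · have : i' = n + 1 := by omega
      rw [this]

lemma build_chain {f : X → X} {δ : ℝ} (hδ : 0 < δ) {M : ℕ} (hM1 : 1 ≤ M)
    (hM : ∀ u v : X, ∀ m, M ≤ m → ChainFrom f δ u v m)
    {k : ℕ} (x : ℕ → X) (a b : ℕ → ℕ)
    (hab : ∀ i < k, a i ≤ b i) (hgap : ∀ i, i + 1 < k → b i + M ≤ a (i + 1)) :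
    ∀ i, i < k → ∃ c : ℕ → X,
      c 0 = f^[a 0] (x 0) ∧ c (b i - a 0) = f^[b i] (x i) ∧
      (∀ t < b i - a 0, dist (f (c t)) (c (t + 1)) < δ) ∧
      ∀ i' ≤ i, ∀ j, a i' ≤ j → j ≤ b i' → c (j - a 0) = f^[j] (x i') := by
  intro i
  induction i with
  | zero =>
    intro h0k
    have hab0 := hab 0 h0k
    refine ⟨fun t => f^[a 0 + t] (x 0), by simp, ?_, ?_, ?_⟩
    · show f^[a 0 + (b 0 - a 0)] (x 0) = f^[b 0] (x 0)
      rw [show a 0 + (b 0 - a 0) = b 0 by omega]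
    · intro t ht
      show dist (f (f^[a 0 + t] (x 0))) (f^[a 0 + (t + 1)] (x 0)) < δ
      rw [show a 0 + (t + 1) = (a 0 + t) + 1 from rfl, Function.iterate_succ_apply', dist_self]
      exact hδ
    · intro i' hi' j hja hjb
      interval_cases i'
      show f^[a 0 + (j - a 0)] (x 0) = f^[j] (x 0)
      rw [show a 0 + (j - a 0) = j by omega]
  | succ i ih =>
    intro hik
    have hik' : i < k := by omega
    obtain ⟨c, hc0, hcend, hcch, hcval⟩ := ih hik'
    have ha0bi : a 0 ≤ b i := le_trans (a_mono hM1 hab hgap i hik') (hab i hik')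
    have hgapi := hgap i hik
    have habi1 := hab (i + 1) hik
    have ha0ai1 : a 0 ≤ a (i + 1) := a_mono hM1 hab hgap (i + 1) hik
    set m1 := b i - a 0 with hm1
    set m2 := a (i + 1) - b i with hm2
    set m3 := b (i + 1) - a (i + 1) with hm3
    obtain ⟨cg, hcg0, hcgm, hcgch⟩ :=
      hM (f^[b i] (x i)) (f^[a (i + 1)] (x (i + 1))) m2 (by omega)
    set o : ℕ → X := fun t => f^[a (i + 1) + t] (x (i + 1)) with ho
    have hoch : ∀ t < m3, dist (f (o t)) (o (t + 1)) < δ := by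
      intro t ht
      show dist (f (f^[a (i + 1) + t] (x (i + 1)))) (f^[a (i + 1) + (t + 1)] (x (i + 1))) < δ
      rw [show a (i + 1) + (t + 1) = (a (i + 1) + t) + 1 from rfl,
        Function.iterate_succ_apply', dist_self]
      exact hδ
    set d1 := chainConcat m1 c cg with hd1
    have hjoin1 : c m1 = cg 0 := by rw [hcend, hcg0]
    have hd1ch : ∀ t < m1 + m2, dist (f (d1 t)) (d1 (t + 1)) < δ :=
      isChain_concat hcch hcgch hjoin1
    have hd1end : d1 (m1 + m2) = f^[a (i + 1)] (x (i + 1)) := by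
      rw [hd1, chainConcat_right hjoin1 m2, hcgm]
    set d := chainConcat (m1 + m2) d1 o with hd
    have hjoin2 : d1 (m1 + m2) = o 0 := by
      rw [hd1end]
      show f^[a (i + 1)] (x (i + 1)) = f^[a (i + 1) + 0] (x (i + 1))
      simp
    have hdch : ∀ t < (m1 + m2) + m3, dist (f (d t)) (d (t + 1)) < δ :=
      isChain_concat hd1ch hoch hjoin2
    have hlen : (m1 + m2) + m3 = b (i + 1) - a 0 := by omega
    refine ⟨d, ?_, ?_, ?_, ?_⟩
    · rw [hd, chainConcat_left d1 o (Nat.zero_le _), hd1,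
        chainConcat_left c cg (Nat.zero_le _), hc0]
    · rw [show b (i + 1) - a 0 = (m1 + m2) + m3 by omega, hd,
        chainConcat_right hjoin2 m3]
      show f^[a (i + 1) + m3] (x (i + 1)) = f^[b (i + 1)] (x (i + 1))
      rw [show a (i + 1) + m3 = b (i + 1) by omega]
    · rw [← hlen]; exact hdch
    · intro i' hi' j hja hjb
      rcases Nat.lt_or_ge i' (i + 1) with h1 | h1
      · have hbi' : b i' ≤ b i := b_mono hab hgap i' i (by omega) hik'
        have hidx : j - a 0 ≤ m1 := by omega
        rw [hd, chainConcat_left d1 o (by omega), hd1, chainConcat_left c cg hidx]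
        exact hcval i' (by omega) j hja hjb
      · have h2 : i' = i + 1 := by omega
        subst h2
        rw [show j - a 0 = (m1 + m2) + (j - a (i + 1)) by omega, hd,
          chainConcat_right hjoin2 _]
        show f^[a (i + 1) + (j - a (i + 1))] (x (i + 1)) = f^[j] (x (i + 1))
        rw [show a (i + 1) + (j - a (i + 1)) = j by omega]

end Aux

theorem weak_mixing_expansive_shadowing_periodic_specification [MetricSpace X] [CompactSpace X]
    (f : X → X) (hf : Continuous f) (hwm : WeaklyMixing f)
    (hexp : ∃ β : ℝ, PosExpansive f β) (hsh : HasShadowing f) :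
    ∀ ε > (0 : ℝ), ∃ M : ℕ, 0 < M ∧
      ∀ k : ℕ, 2 ≤ k → ∀ x : ℕ → X, ∀ a b : ℕ → ℕ,
        (∀ i < k, a i ≤ b i) →
        (∀ i, i + 1 < k → b i + M ≤ a (i + 1)) →
        ∀ p : ℕ, M + b (k - 1) - a 0 ≤ p →
        ∃ z : X, f^[p] z = z ∧
          ∀ i < k, ∀ j : ℕ, a i ≤ j → j ≤ b i →
            dist (f^[j] z) (f^[j] (x i)) < ε := by
  intro ε hε
  obtain ⟨β, hβpos, hβ⟩ := hexp
  set ε0 := min ε (β / 2) with hε0def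
  have hε0pos : 0 < ε0 := lt_min hε (by linarith)
  obtain ⟨δ, hδpos, hδsh⟩ := hsh ε0 hε0pos
  obtain ⟨M, hM1, hM⟩ := chain_mixing_unif hf hwm hδpos
  refine ⟨M, hM1, ?_⟩
  intro k hk x a b hab hgap p hp
  have hk1 : k - 1 < k := by omega
  have ha0bk : a 0 ≤ b (k - 1) := le_trans (a_mono hM1 hab hgap (k - 1) hk1) (hab (k - 1) hk1)
  have hp1 : 1 ≤ p := by omega
  have hpgt : b (k - 1) - a 0 < p := by omega
  obtain ⟨c, hc0, hcend, hcch, hcval⟩ := build_chain hδpos hM1 hM x a b hab hgap (k - 1) hk1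
  obtain ⟨cc, hcc0, hccp, hccch⟩ :=
    hM (f^[b (k - 1)] (x (k - 1))) (f^[a 0] (x 0)) (p - (b (k - 1) - a 0)) (by omega)
  set L := b (k - 1) - a 0 with hL
  set full := chainConcat L c cc with hfull
  have hjoin : c L = cc 0 := by rw [hcend, hcc0]
  have hfull0 : full 0 = f^[a 0] (x 0) := by
    rw [hfull, chainConcat_left c cc (Nat.zero_le _), hc0]
  have hfullp : full p = f^[a 0] (x 0) := by
    rw [show p = L + (p - L) by omega, hfull, chainConcat_right hjoin _, hccp]
  have hfullch : ∀ i < p, dist (f (full i)) (full (i + 1)) < δ := by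
    have h1 := isChain_concat hcch hccch hjoin
    rwa [show L + (p - L) = p by omega] at h1
  set y : ℕ → X := fun n => full (n % p) with hy
  have hpo : IsPseudoOrbit f δ y := periodic_pseudo hp1 hfull0 hfullp hfullch
  obtain ⟨z', hz'⟩ := hδsh y hpo
  have hyper : ∀ n : ℕ, y (n + p) = y n := by
    intro n
    simp only [hy, Nat.add_mod_right]
  have hper : f^[p] z' = z' := by
    refine eq_of_close ⟨hβpos, hβ⟩ (fun n => ?_)
    have h1 : f^[n] (f^[p] z') = f^[n + p] z' := (Function.iterate_add_apply f n p z').symm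
    have h2 : dist (f^[n + p] z') (y n) < ε0 := by
      have := hz' (n + p)
      rwa [hyper n] at this
    have h3 : dist (f^[n] z') (y n) < ε0 := hz' n
    have h4 : ε0 ≤ β / 2 := by rw [hε0def]; exact min_le_right _ _
    calc dist (f^[n] (f^[p] z')) (f^[n] z')
        ≤ dist (f^[n] (f^[p] z')) (y n) + dist (y n) (f^[n] z') := dist_triangle _ _ _
      _ = dist (f^[n + p] z') (y n) + dist (f^[n] z') (y n) := by rw [h1, dist_comm (y n)]
      _ ≤ ε0 + ε0 := by linarith
      _ ≤ β := by linarith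
  have hd := Nat.div_add_mod (a 0) p
  set P := p * (a 0 / p + 1) with hP
  have hPval : P = p * (a 0 / p) + p := by rw [hP, Nat.mul_add, Nat.mul_one]
  have ha0P : a 0 < P := by
    have h1 : a 0 % p < p := Nat.mod_lt _ hp1
    set T := p * (a 0 / p) with hT
    omega
  set m := P - a 0 with hm
  have hmP : a 0 + m = P := by omega
  set z := f^[m] z' with hz
  have hPper : f^[P] z' = z' := iterate_periodic hper (a 0 / p + 1)
  have hzper : f^[p] z = z := by
    rw [hz, ← Function.iterate_add_apply, Nat.add_comm, Function.iterate_add_apply, hper]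
  refine ⟨z, hzper, ?_⟩
  intro i hi j hja hjb
  have hii : i ≤ k - 1 := by omega
  have ha0j : a 0 ≤ j := le_trans (a_mono hM1 hab hgap i hi) hja
  have hjbk : j ≤ b (k - 1) := le_trans hjb (b_mono hab hgap i (k - 1) hii hk1)
  have hjz : f^[j] z = f^[j - a 0] z' := by
    rw [hz, ← Function.iterate_add_apply, show j + m = (j - a 0) + P by omega,
      Function.iterate_add_apply, hPper]
  have hyval : y (j - a 0) = f^[j] (x i) := by
    have h1 : j - a 0 < p := by omega
    have h2 : (j - a 0) % p = j - a 0 := Nat.mod_eq_of_lt h1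
    rw [hy]
    simp only
    rw [h2, hfull, chainConcat_left c cc (by omega)]
    exact hcval i hii j hja hjb
  have h3 := hz' (j - a 0)
  rw [hyval] at h3
  rw [hjz]
  exact lt_of_lt_of_le h3 (by rw [hε0def]; exact min_le_left _ _)
end
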